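/- For positive integers n and k with 1 ≤ k ≤ n-1, the polynomial P_{n,k}(x) = ∑_{j=0}^{k} C(n, j) x^j has only simple roots (i.e., P_{n,k} is squarefree as a polynomial over ℚ, equivalently gcd(P_{n,k}, P'_{n,k}) = 1). -/
import Mathlib
open Polynomial Finset

lemma coeffP (n k m : ℕ) :
    (∑ j ∈ range (k+1), C ((n.choose j : ℚ)) * X ^ j).coeff m
      = if m ≤ k then (n.choose m : ℚ) else 0 := by
  rw [finset_sum_coeff]
  simp only [coeff_C_mul, coeff_X_pow, mul_ite, mul_one, mul_zero]
  simp only [eq_comm (a := m)]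
  rw [Finset.sum_ite_eq' (range (k+1)) m]
  simp [Nat.lt_succ_iff]

lemma key (n k : ℕ) (hn : 1 ≤ n) (hk : 1 ≤ k) (hkn : k ≤ n - 1) :
    C (n:ℚ) * (∑ j ∈ range (k+1), C ((n.choose j : ℚ)) * X ^ j)
      = (1 + X) * derivative (∑ j ∈ range (k+1), C ((n.choose j : ℚ)) * X ^ j)
        + C ((((n-k) * n.choose k : ℕ) : ℚ)) * X ^ k := by
  have hkn' : k < n := by omega
  ext m
  rw [coeff_C_mul, coeffP, add_mul, one_mul, coeff_add, coeff_add, coeff_derivative, coeffP,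
    coeff_C_mul, coeff_X_pow]
  rcases Nat.lt_trichotomy m k with h | h | h
  · -- m < k
    rw [if_pos (by omega : m ≤ k), if_pos (by omega : m + 1 ≤ k), if_neg (by omega : ¬ m = k)]
    have hx : (X * derivative (∑ j ∈ range (k+1), C ((n.choose j : ℚ)) * X ^ j)).coeff m
        = if m = 0 then 0 else (n.choose m : ℚ) * m := by
      cases m with
      | zero => simp [coeff_X_mul_zero]
      | succ i =>
        rw [coeff_X_mul, coeff_derivative, coeffP, if_pos (by omega : i + 1 ≤ k)]
        simp
    rw [hx]
    have hmn : m ≤ n := by omega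
    have hid : (n.choose (m+1) * (m+1) : ℚ) = n.choose m * ((n:ℚ) - m) := by
      rw [← Nat.cast_sub hmn]
      exact_mod_cast Nat.choose_succ_right_eq n m
    rcases Nat.eq_zero_or_pos m with rfl | hm
    · simp only [if_pos rfl, Nat.cast_zero, add_zero, zero_add]
      simp only [Nat.cast_zero, sub_zero, Nat.choose_zero_right, Nat.cast_one, one_mul] at hid ⊢
      push_cast
      linarith [hid]
    · rw [if_neg (by omega)]
      push_cast
      push_cast at hid
      linarith [hid]
  · -- m = k
    subst h
    rw [if_pos le_rfl, if_neg (by omega : ¬ m + 1 ≤ m), if_pos rfl, mul_one]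
    have hx : (X * derivative (∑ j ∈ range (m+1), C ((n.choose j : ℚ)) * X ^ j)).coeff m
        = (n.choose m : ℚ) * m := by
      obtain ⟨i, rfl⟩ : ∃ i, m = i + 1 := ⟨m - 1, by omega⟩
      rw [coeff_X_mul, coeff_derivative, coeffP, if_pos le_rfl]
      push_cast; ring
    rw [hx, zero_mul, zero_add]
    have hsub : ((n - m : ℕ) : ℚ) = (n : ℚ) - m := by
      have : m ≤ n := by omega
      push_cast [this]; ring
    push_cast [hsub]
    ring
  · -- m > k
    rw [if_neg (by omega : ¬ m ≤ k), if_neg (by omega : ¬ m + 1 ≤ k), if_neg (by omega : ¬ m = k)]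
    have hx : (X * derivative (∑ j ∈ range (k+1), C ((n.choose j : ℚ)) * X ^ j)).coeff m = 0 := by
      obtain ⟨i, rfl⟩ : ∃ i, m = i + 1 := ⟨m - 1, by omega⟩
      rw [coeff_X_mul, coeff_derivative, coeffP, if_neg (by omega)]
      simp
    rw [hx]
    simp

open Polynomial in
theorem truncated_binomial_squarefree (n k : ℕ) (hn : 1 ≤ n) (hk : 1 ≤ k) (hkn : k ≤ n - 1) :
    Squarefree (∑ j ∈ Finset.range (k + 1), C ((n.choose j : ℚ)) * X ^ j) := by
  set P : ℚ[X] := ∑ j ∈ Finset.range (k + 1), C ((n.choose j : ℚ)) * X ^ j with hP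
  have hkn' : k < n := by omega
  set c : ℚ := (((n-k) * n.choose k : ℕ) : ℚ) with hc
  have hc0 : c ≠ 0 := by
    have h1 : 0 < (n-k) * n.choose k :=
      Nat.mul_pos (by omega) (Nat.choose_pos hkn'.le)
    rw [hc]
    exact_mod_cast h1.ne'
  have hP0 : P.coeff 0 = 1 := by rw [hP, coeffP]; simp
  have hcop : IsCoprime (X ^ k) P := by
    refine IsCoprime.pow_left ?_
    rw [(Polynomial.irreducible_X (R := ℚ)).coprime_iff_not_dvd, X_dvd_iff, hP0]
    exact one_ne_zero
  obtain ⟨a, b, hab⟩ := hcop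
  have hkey := key n k hn hk hkn
  rw [← hP] at hkey
  apply Separable.squarefree
  rw [Polynomial.separable_def, isCoprime_comm]
  refine ⟨-(a * C c⁻¹ * (1 + X)), b + a * C c⁻¹ * C (n:ℚ), ?_⟩
  have : a * C c⁻¹ * (C (n:ℚ) * P - (1 + X) * derivative P) = a * X ^ k := by
    rw [hkey, add_sub_cancel_left, mul_assoc a, ← mul_assoc (C c⁻¹), ← C_mul,
      ← hc, inv_mul_cancel₀ hc0, C_1, one_mul]
  calc -(a * C c⁻¹ * (1 + X)) * derivative P + (b + a * C c⁻¹ * C (n:ℚ)) * P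
      = a * C c⁻¹ * (C (n:ℚ) * P - (1 + X) * derivative P) + b * P := by ring
    _ = a * X ^ k + b * P := by rw [this]
    _ = 1 := hab
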